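/- If a simplicial set X is lower 2-Segal, then for every n ≥ 0 and every 0 ≤ i ≤ n, the square with top s_i : X_{n+1} → X_{n+2}, left d_{n+1} : X_{n+1} → X_n, right d_{n+2} : X_{n+2} → X_{n+1}, bottom s_i : X_n → X_{n+1} is a pullback of sets. -/

import Mathlib

open CategoryTheory Simplicial

universe u

/-- A commuting square of sets (top `f`, left `g`, right `h`, bottom `k`) is a pullback
if the canonical map to the fiber product is a bijection. -/
def IsPullbackSet {A B C D : Type u} (f : A → B) (g : A → C) (h : B → D) (k : C → D) : Prop :=
  (∀ a, h (f a) = k (g a)) ∧ ∀ (b : B) (c : C), h b = k c → ∃! a : A, f a = b ∧ g a = c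

/-- The lower 2-Segal condition: for every `n ≥ 2` (here `n = m + 2`) and every `0 < i < n`,
the square with top `d_i : X_{n+1} → X_n`, left `d_{n+1} : X_{n+1} → X_n`,
right `d_n : X_n → X_{n-1}`, bottom `d_i : X_n → X_{n-1}` is a pullback. -/
def LowerTwoSegal (X : SSet.{u}) : Prop :=
  ∀ (m i : ℕ), 0 < i → ∀ h2 : i < m + 2,
    IsPullbackSet
      (fun x => X.δ (⟨i, by omega⟩ : Fin (m + 4)) x)
      (fun x => X.δ (⟨m + 3, by omega⟩ : Fin (m + 4)) x)
      (fun x => X.δ (⟨m + 2, by omega⟩ : Fin (m + 3)) x)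
      (fun x => X.δ (⟨i, by omega⟩ : Fin (m + 3)) x)

set_option maxHeartbeats 1000000 in
/-- If `X` is lower 2-Segal, then for every `n ≥ 0` and every `0 ≤ i ≤ n`, the square with
top `s_i : X_{n+1} → X_{n+2}`, left `d_{n+1} : X_{n+1} → X_n`,
right `d_{n+2} : X_{n+2} → X_{n+1}`, bottom `s_i : X_n → X_{n+1}` is a pullback. -/
theorem lowerTwoSegal_degeneracy_square (X : SSet.{u}) (h : LowerTwoSegal X)
    (n i : ℕ) (hi : i ≤ n) :
    IsPullbackSet
      (fun x => X.σ (⟨i, by omega⟩ : Fin (n + 2)) x)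
      (fun x => X.δ (⟨n + 1, by omega⟩ : Fin (n + 2)) x)
      (fun x => X.δ (⟨n + 2, by omega⟩ : Fin (n + 3)) x)
      (fun x => X.σ (⟨i, by omega⟩ : Fin (n + 1)) x) := by
  have hlt : (Fin.castSucc (⟨i, by omega⟩ : Fin (n+1)) : Fin (n+2)) < ⟨n+1, by omega⟩ := by
    simp only [Fin.lt_def, Fin.coe_castSucc]; omega
  have hlt2 : (Fin.castSucc (⟨i, by omega⟩ : Fin (n+2)) : Fin (n+3)) < ⟨n+2, by omega⟩ := by
    simp only [Fin.lt_def, Fin.coe_castSucc]; omega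
  have hlt3 : (Fin.castSucc (⟨i+1, by omega⟩ : Fin (n+2)) : Fin (n+3)) < ⟨n+2, by omega⟩ := by
    simp only [Fin.lt_def, Fin.coe_castSucc]; omega
  -- commuting square: d_{n+2} ∘ s_i = s_i ∘ d_{n+1} on X_{n+1}
  have comm : ∀ x : X _⦋n+1⦌,
      X.δ (⟨n+2, by omega⟩ : Fin (n+3)) (X.σ (⟨i, by omega⟩ : Fin (n+2)) x)
        = X.σ (⟨i, by omega⟩ : Fin (n+1)) (X.δ (⟨n+1, by omega⟩ : Fin (n+2)) x) :=
    fun x => ConcreteCategory.congr_hom (X.δ_comp_σ_of_gt (n := n)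
      (i := (⟨n+1, by omega⟩ : Fin (n+2))) (j := (⟨i, by omega⟩ : Fin (n+1))) hlt) x
  -- d_{n+3} ∘ s_i = s_i ∘ d_{n+2} on X_{n+2}
  have comm2 : ∀ x : X _⦋n+2⦌,
      X.δ (⟨n+3, by omega⟩ : Fin (n+4)) (X.σ (⟨i, by omega⟩ : Fin (n+3)) x)
        = X.σ (⟨i, by omega⟩ : Fin (n+2)) (X.δ (⟨n+2, by omega⟩ : Fin (n+3)) x) :=
    fun x => ConcreteCategory.congr_hom (X.δ_comp_σ_of_gt (n := n+1)
      (i := (⟨n+2, by omega⟩ : Fin (n+3))) (j := (⟨i, by omega⟩ : Fin (n+2))) hlt2) x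
  -- d_{n+3} ∘ s_{i+1} = s_{i+1} ∘ d_{n+2} on X_{n+2}
  have comm3 : ∀ x : X _⦋n+2⦌,
      X.δ (⟨n+3, by omega⟩ : Fin (n+4)) (X.σ (⟨i+1, by omega⟩ : Fin (n+3)) x)
        = X.σ (⟨i+1, by omega⟩ : Fin (n+2)) (X.δ (⟨n+2, by omega⟩ : Fin (n+3)) x) :=
    fun x => ConcreteCategory.congr_hom (X.δ_comp_σ_of_gt (n := n+1)
      (i := (⟨n+2, by omega⟩ : Fin (n+3))) (j := (⟨i+1, by omega⟩ : Fin (n+2))) hlt3) x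
  -- d_{i+1} ∘ s_i = id on X_{n+1} (indices in level n+2)
  have succ1 : ∀ x : X _⦋n+1⦌,
      X.δ (⟨i+1, by omega⟩ : Fin (n+3)) (X.σ (⟨i, by omega⟩ : Fin (n+2)) x) = x :=
    fun x => ConcreteCategory.congr_hom (X.δ_comp_σ_succ (n := n+1) (i := (⟨i, by omega⟩ : Fin (n+2)))) x
  -- d_{i+1} ∘ s_i = id on X_n
  have succ0 : ∀ x : X _⦋n⦌,
      X.δ (⟨i+1, by omega⟩ : Fin (n+2)) (X.σ (⟨i, by omega⟩ : Fin (n+1)) x) = x :=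
    fun x => ConcreteCategory.congr_hom (X.δ_comp_σ_succ (n := n) (i := (⟨i, by omega⟩ : Fin (n+1)))) x
  -- d_{i+1} ∘ s_{i+1} = id on X_{n+2} (castSucc form)
  have self2 : ∀ x : X _⦋n+2⦌,
      X.δ (⟨i+1, by omega⟩ : Fin (n+4)) (X.σ (⟨i+1, by omega⟩ : Fin (n+3)) x) = x :=
    fun x => ConcreteCategory.congr_hom (X.δ_comp_σ_self (n := n+2) (i := (⟨i+1, by omega⟩ : Fin (n+3)))) x
  -- d_{i+1} ∘ s_i = id on X_{n+2}
  have succ2 : ∀ x : X _⦋n+2⦌,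
      X.δ (⟨i+1, by omega⟩ : Fin (n+4)) (X.σ (⟨i, by omega⟩ : Fin (n+3)) x) = x :=
    fun x => ConcreteCategory.congr_hom (X.δ_comp_σ_succ (n := n+2) (i := (⟨i, by omega⟩ : Fin (n+3)))) x
  -- d_{i+2} ∘ s_{i+1} = id on X_{n+2}
  have succ3 : ∀ x : X _⦋n+2⦌,
      X.δ (⟨i+2, by omega⟩ : Fin (n+4)) (X.σ (⟨i+1, by omega⟩ : Fin (n+3)) x) = x :=
    fun x => ConcreteCategory.congr_hom (X.δ_comp_σ_succ (n := n+2) (i := (⟨i+1, by omega⟩ : Fin (n+3)))) x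
  -- d_{i+2} ∘ s_i = s_i ∘ d_{i+1} on X_{n+2}
  have gt1 : ∀ x : X _⦋n+2⦌,
      X.δ (⟨i+2, by omega⟩ : Fin (n+4)) (X.σ (⟨i, by omega⟩ : Fin (n+3)) x)
        = X.σ (⟨i, by omega⟩ : Fin (n+2)) (X.δ (⟨i+1, by omega⟩ : Fin (n+3)) x) :=
    fun x => ConcreteCategory.congr_hom (X.δ_comp_σ_of_gt (n := n+1)
      (i := (⟨i+1, by omega⟩ : Fin (n+3))) (j := (⟨i, by omega⟩ : Fin (n+2)))
      (by simp only [Fin.lt_def, Fin.coe_castSucc]; omega)) x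
  -- s_{i+1} s_i = s_i s_i : X_n → X_{n+2}
  have ss : ∀ x : X _⦋n⦌,
      X.σ (⟨i+1, by omega⟩ : Fin (n+2)) (X.σ (⟨i, by omega⟩ : Fin (n+1)) x)
        = X.σ (⟨i, by omega⟩ : Fin (n+2)) (X.σ (⟨i, by omega⟩ : Fin (n+1)) x) := by
    intro x
    have := ConcreteCategory.congr_hom (X.σ_comp_σ (n := n)
      (i := (⟨i, by omega⟩ : Fin (n+1))) (j := (⟨i, by omega⟩ : Fin (n+1))) le_rfl) x
    exact this.symm
  -- d_{n+1} ∘ d_{i+1} = d_{i+1} ∘ d_{n+2} on X_{n+2}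
  have dd : ∀ x : X _⦋n+2⦌,
      X.δ (⟨n+1, by omega⟩ : Fin (n+2)) (X.δ (⟨i+1, by omega⟩ : Fin (n+3)) x)
        = X.δ (⟨i+1, by omega⟩ : Fin (n+2)) (X.δ (⟨n+2, by omega⟩ : Fin (n+3)) x) := by
    intro x
    have := ConcreteCategory.congr_hom (X.δ_comp_δ (n := n)
      (i := (⟨i+1, by omega⟩ : Fin (n+2))) (j := (⟨n+1, by omega⟩ : Fin (n+2)))
      (by simp only [Fin.le_def]; omega)) x
    exact this.symm
  refine ⟨comm, ?_⟩
  intro b c hbc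
  simp only at hbc
  -- the 2-Segal pullback at (m = n, index i+1)
  obtain ⟨-, hpb⟩ := h n (i+1) (by omega) (by omega)
  -- both s_{i+1} b and s_i b solve the lifting problem for (b, s_i (s_i c))
  have hcompat : X.δ (⟨n+2, by omega⟩ : Fin (n+3)) b
      = X.δ (⟨i+1, by omega⟩ : Fin (n+3)) (X.σ (⟨i, by omega⟩ : Fin (n+2)) (X.σ (⟨i, by omega⟩ : Fin (n+1)) c)) := by
    exact hbc.trans (succ1 (X.σ (⟨i, by omega⟩ : Fin (n+1)) c)).symm
  obtain ⟨a₀, -, huniq⟩ := hpb b (X.σ (⟨i, by omega⟩ : Fin (n+2)) (X.σ (⟨i, by omega⟩ : Fin (n+1)) c)) hcompat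
  have m2a : X.δ (⟨n+3, by omega⟩ : Fin (n+4)) (X.σ (⟨i+1, by omega⟩ : Fin (n+3)) b)
      = X.σ (⟨i, by omega⟩ : Fin (n+2)) (X.σ (⟨i, by omega⟩ : Fin (n+1)) c) :=
    (comm3 b).trans ((congrArg (fun z => X.σ (⟨i+1, by omega⟩ : Fin (n+2)) z) hbc).trans (ss c))
  have m2b : X.δ (⟨n+3, by omega⟩ : Fin (n+4)) (X.σ (⟨i, by omega⟩ : Fin (n+3)) b)
      = X.σ (⟨i, by omega⟩ : Fin (n+2)) (X.σ (⟨i, by omega⟩ : Fin (n+1)) c) :=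
    (comm2 b).trans (congrArg (fun z => X.σ (⟨i, by omega⟩ : Fin (n+2)) z) hbc)
  have key : X.σ (⟨i+1, by omega⟩ : Fin (n+3)) b = X.σ (⟨i, by omega⟩ : Fin (n+3)) b :=
    (huniq (X.σ (⟨i+1, by omega⟩ : Fin (n+3)) b) ⟨self2 b, m2a⟩).trans
      (huniq (X.σ (⟨i, by omega⟩ : Fin (n+3)) b) ⟨succ2 b, m2b⟩).symm
  -- hence b = s_i (d_{i+1} b)
  have hb : X.σ (⟨i, by omega⟩ : Fin (n+2)) (X.δ (⟨i+1, by omega⟩ : Fin (n+3)) b) = b :=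
    (gt1 b).symm.trans
      ((congrArg (fun z => X.δ (⟨i+2, by omega⟩ : Fin (n+4)) z) key.symm).trans (succ3 b))
  have hleft : X.δ (⟨n+1, by omega⟩ : Fin (n+2)) (X.δ (⟨i+1, by omega⟩ : Fin (n+3)) b) = c :=
    (dd b).trans ((congrArg (fun z => X.δ (⟨i+1, by omega⟩ : Fin (n+2)) z) hbc).trans (succ0 c))
  refine ⟨X.δ (⟨i+1, by omega⟩ : Fin (n+3)) b, ⟨hb, hleft⟩, ?_⟩
  rintro a ⟨ha1, ha2⟩
  simp only at ha1
  exact (succ1 a).symm.trans (congrArg (fun z => X.δ (⟨i+1, by omega⟩ : Fin (n+3)) z) ha1)
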